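/- arXiv:1701.08940 — 4 statements merged into one kernel-verified Lean document; each statement's English description precedes it below -/
import Mathlib

section
/- For every τ = u + iv in the upper half-plane and every (x,y) ∈ ℝ² with x ≠ 0, the function τ ↦ φ*_τ(x,y) satisfies ξ(φ*_·(x,y))(τ) = −φ_τ(x,y), i.e. 2iv·conj(∂/∂conj(τ) [e(((y²−x²)/2)τ)·sgn(x)·erfc(√(2πv)|x|)]) = −√(2v)·x·e((x²/2)τ − (y²/2)·conj(τ)). -/
open MeasureTheory Filter Set

noncomputable section

/-- `e(z) = exp(2πiz)` -/
def eC (z : ℂ) : ℂ := Complex.exp (2 * Real.pi * Complex.I * z)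

/-- The complementary error function `erfc(x) = (2/√π)∫_x^∞ e^{-r²} dr`. -/
def erfc (x : ℝ) : ℝ := (2 / Real.sqrt Real.pi) * ∫ r in Set.Ioi x, Real.exp (-(r ^ 2))

/-- `φ_τ(x,y) = √(2v)·x·e((x²/2)τ - (y²/2)·conj τ)` where `v = Im τ`. -/
def phi (τ : ℂ) (x y : ℝ) : ℂ :=
  (Real.sqrt (2 * τ.im) : ℂ) * (x : ℂ) *
    eC (((x : ℂ) ^ 2 / 2) * τ - ((y : ℂ) ^ 2 / 2) * (starRingEnd ℂ) τ)

/-- `φ*_τ(x,y) = e(((y²-x²)/2)τ)·sgn(x)·erfc(√(2πv)|x|)`. -/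
def phiStar (τ : ℂ) (x y : ℝ) : ℂ :=
  eC ((((y : ℂ) ^ 2 - (x : ℂ) ^ 2) / 2) * τ) * (Real.sign x : ℂ) *
    (erfc (Real.sqrt (2 * Real.pi * τ.im) * |x|) : ℂ)

/-- The Wirtinger derivative `∂f/∂conj(τ) = (1/2)(∂f/∂u + i·∂f/∂v)`. -/
def dbar (f : ℂ → ℂ) (τ : ℂ) : ℂ :=
  (1 / 2) * (fderiv ℝ f τ 1 + Complex.I * fderiv ℝ f τ Complex.I)

/-- The `ξ`-operator in weight one: `ξ(f)(τ) = 2iv·conj(∂f/∂conj(τ))`. -/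
def xi (f : ℂ → ℂ) (τ : ℂ) : ℂ :=
  2 * Complex.I * (τ.im : ℂ) * (starRingEnd ℂ) (dbar f τ)


lemma integrable_gauss : Integrable (fun r : ℝ => Real.exp (-(r ^ 2))) := by
  simpa [neg_mul, one_mul] using integrable_exp_neg_mul_sq (one_pos)

lemma erfc_eq (t : ℝ) : erfc t = (2 / Real.sqrt Real.pi) *
    ((∫ r in Set.Ioi (0:ℝ), Real.exp (-(r ^ 2))) - ∫ r in (0:ℝ)..t, Real.exp (-(r ^ 2))) := by
  unfold erfc
  congr 1
  have h1 := intervalIntegral.integral_Iic_add_Ioi (b := t) (μ := volume)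
    integrable_gauss.integrableOn integrable_gauss.integrableOn
  have h2 := intervalIntegral.integral_Iic_add_Ioi (b := (0:ℝ)) (μ := volume)
    integrable_gauss.integrableOn integrable_gauss.integrableOn
  have h3 := intervalIntegral.integral_Iic_sub_Iic (a := (0:ℝ)) (b := t) (μ := volume)
    integrable_gauss.integrableOn integrable_gauss.integrableOn
  linarith

lemma erfc_hasDerivAt (t : ℝ) :
    HasDerivAt erfc (-(2 / Real.sqrt Real.pi * Real.exp (-(t ^ 2)))) t := by
  have hii : IntervalIntegrable (fun r : ℝ => Real.exp (-(r ^ 2))) volume 0 t :=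
    integrable_gauss.intervalIntegrable
  have hcont : Continuous fun r : ℝ => Real.exp (-(r ^ 2)) := by continuity
  have hI : HasDerivAt (fun u => ∫ r in (0:ℝ)..u, Real.exp (-(r ^ 2)))
      (Real.exp (-(t ^ 2))) t :=
    intervalIntegral.integral_hasDerivAt_right hii
      hcont.aestronglyMeasurable.stronglyMeasurableAtFilter hcont.continuousAt
  have := ((hI.const_sub (∫ r in Set.Ioi (0:ℝ), Real.exp (-(r ^ 2)))).const_mul
    (2 / Real.sqrt Real.pi))
  have heq : (fun u => (2 / Real.sqrt Real.pi) *
      ((∫ r in Set.Ioi (0:ℝ), Real.exp (-(r ^ 2))) - ∫ r in (0:ℝ)..u, Real.exp (-(r ^ 2))))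
      = erfc := by
    funext u; exact (erfc_eq u).symm
  rw [heq] at this
  exact this.congr_deriv (by ring)

/-- for `τ` in the upper half-plane and `x ≠ 0`,
`ξ(φ*_·(x,y))(τ) = -φ_τ(x,y)`. -/
theorem stmt0 (τ : ℂ) (hτ : 0 < τ.im) (x y : ℝ) (hx : x ≠ 0) :
    xi (fun σ => phiStar σ x y) τ = - phi τ x y := by
  set v := τ.im with hv
  set c : ℂ := (((y : ℂ) ^ 2 - (x : ℂ) ^ 2) / 2) with hc
  set a : ℝ := Real.sqrt (2 * Real.pi * v) * |x| with ha
  set dE : ℝ := -(2 / Real.sqrt Real.pi * Real.exp (-(a ^ 2))) *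
      (1 / (2 * Real.sqrt (2 * Real.pi * v)) * (2 * Real.pi) * |x|) with hdE
  set A : ℂ := Complex.exp (2 * (Real.pi : ℂ) * Complex.I * (c * τ)) with hA
  have h2πv : (0:ℝ) < 2 * Real.pi * v := by positivity
  have hinner : HasDerivAt (fun t : ℝ => 2 * Real.pi * t) (2 * Real.pi) v := by
    simpa using (hasDerivAt_id v).const_mul (2 * Real.pi)
  have hsq : HasDerivAt (fun t : ℝ => Real.sqrt (2 * Real.pi * t))
      (1 / (2 * Real.sqrt (2 * Real.pi * v)) * (2 * Real.pi)) v := by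
    simpa [Function.comp_def] using (Real.hasDerivAt_sqrt h2πv.ne').comp v hinner
  have hsqa : HasDerivAt (fun t : ℝ => Real.sqrt (2 * Real.pi * t) * |x|)
      (1 / (2 * Real.sqrt (2 * Real.pi * v)) * (2 * Real.pi) * |x|) v := hsq.mul_const _
  have hgv : HasDerivAt (fun t : ℝ => erfc (Real.sqrt (2 * Real.pi * t) * |x|)) dE v := by
    simpa [hdE, Function.comp_def] using (erfc_hasDerivAt a).comp v hsqa
  have hIm : HasFDerivAt (fun σ : ℂ => σ.im) (Complex.imCLM : ℂ →L[ℝ] ℝ) τ :=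
    Complex.imCLM.hasFDerivAt
  have hg : HasFDerivAt (fun σ : ℂ => ((erfc (Real.sqrt (2 * Real.pi * σ.im) * |x|) : ℝ) : ℂ))
      (Complex.ofRealCLM.comp (dE • (Complex.imCLM : ℂ →L[ℝ] ℝ))) τ :=
    Complex.ofRealCLM.hasFDerivAt.comp τ (hgv.comp_hasFDerivAt (f := fun σ : ℂ => σ.im) τ hIm)
  have hlin : HasDerivAt (fun σ : ℂ => 2 * (Real.pi : ℂ) * Complex.I * (c * σ))
      (2 * (Real.pi : ℂ) * Complex.I * c) τ := by
    have := (hasDerivAt_id τ).const_mul (2 * (Real.pi : ℂ) * Complex.I * c)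
    simpa [mul_assoc] using this
  have hhol : HasFDerivAt (fun σ : ℂ => Complex.exp (2 * (Real.pi : ℂ) * Complex.I * (c * σ)))
      ((ContinuousLinearMap.smulRight (1 : ℂ →L[ℂ] ℂ)
        (A * (2 * (Real.pi : ℂ) * Complex.I * c))).restrictScalars ℝ) τ :=
    (hlin.cexp).hasFDerivAt.restrictScalars ℝ
  have htot : HasFDerivAt (fun σ : ℂ => Complex.exp (2 * (Real.pi : ℂ) * Complex.I * (c * σ)) * ((Real.sign x : ℝ) : ℂ)
        * ((erfc (Real.sqrt (2 * Real.pi * σ.im) * |x|) : ℝ) : ℂ)) _ τ := (hhol.mul_const ((Real.sign x : ℝ) : ℂ)).mul hg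
  have hfun : (fun σ : ℂ => Complex.exp (2 * (Real.pi : ℂ) * Complex.I * (c * σ)) * ((Real.sign x : ℝ) : ℂ)
        * ((erfc (Real.sqrt (2 * Real.pi * σ.im) * |x|) : ℝ) : ℂ))
      = (fun σ => phiStar σ x y) := by
    funext σ; simp [phiStar, eC, hc]
  rw [hfun] at htot
  have hfd := htot.fderiv
  have e1 := congrArg (fun L : ℂ →L[ℝ] ℂ => L 1) hfd
  have e2 := congrArg (fun L : ℂ →L[ℝ] ℂ => L Complex.I) hfd
  simp only [ContinuousLinearMap.add_apply, ContinuousLinearMap.smul_apply,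
    ContinuousLinearMap.comp_apply, ContinuousLinearMap.coe_restrictScalars',
    ContinuousLinearMap.smulRight_apply, ContinuousLinearMap.one_apply,
    Complex.imCLM_apply, Complex.ofRealCLM_apply, Complex.one_im, Complex.I_im,
    mul_zero, mul_one, Complex.ofReal_zero, smul_eq_mul, Complex.ofReal_mul,
    Complex.real_smul] at e1 e2
  have hdbar : dbar (fun σ => phiStar σ x y) τ
      = (Complex.I / 2) * (A * ((Real.sign x : ℝ) : ℂ) * (dE : ℂ)) := by
    rw [← hA] at e2
    rw [dbar, e1, e2]
    linear_combination (1 / 2 * ((erfc (Real.sqrt (2 * Real.pi * τ.im) * |x|) : ℝ) : ℂ)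
      * ((Real.sign x : ℝ) : ℂ) * A * (2 * (Real.pi : ℂ) * Complex.I * c)) * Complex.I_sq
  -- real scalar identity
  have hsπ : (0:ℝ) < Real.sqrt Real.pi := Real.sqrt_pos.mpr Real.pi_pos
  have hs2v : (0:ℝ) < Real.sqrt (2 * v) := Real.sqrt_pos.mpr (by positivity)
  have hsplit : Real.sqrt (2 * Real.pi * v) = Real.sqrt Real.pi * Real.sqrt (2 * v) := by
    rw [show 2 * Real.pi * v = Real.pi * (2 * v) by ring, Real.sqrt_mul Real.pi_pos.le]
  have hsx : Real.sign x * |x| = x := by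
    rcases hx.lt_or_gt with h | h
    · simp [Real.sign_of_neg h, abs_of_neg h]
    · simp [Real.sign_of_pos h, abs_of_pos h]
  have e1 : Real.sqrt Real.pi * Real.sqrt Real.pi = Real.pi := Real.mul_self_sqrt Real.pi_pos.le
  have e2 : Real.sqrt (2 * v) * Real.sqrt (2 * v) = 2 * v := Real.mul_self_sqrt (by positivity)
  have hreal : v * Real.sign x * dE
      = -(Real.sqrt (2 * v) * x * Real.exp (-(a ^ 2))) := by
    have key : ∀ p q E s ax xx vv : ℝ, 0 < p → 0 < q → p * p = Real.pi → q * q = 2 * vv →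
        s * ax = xx →
        vv * s * (-(2 / p * E) * (1 / (2 * (p * q)) * (2 * Real.pi) * ax)) = -(q * xx * E) := by
      intro p q E s ax xx vv hp hq h3 h4 h5
      field_simp
      linear_combination (-2 * vv * E * Real.pi) * h5 + (E * xx * q * q) * h3
        + (E * xx * Real.pi) * h4
    rw [hdE, hsplit]
    exact key _ _ _ _ _ _ _ hsπ hs2v e1 e2 hsx
  have hconjA : (starRingEnd ℂ) A
      = Complex.exp ((starRingEnd ℂ) (2 * (Real.pi : ℂ) * Complex.I * (c * τ))) := by
    rw [hA]; exact (Complex.exp_conj _).symm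
  have ha2 : a ^ 2 = 2 * Real.pi * v * x ^ 2 := by
    rw [ha, mul_pow, Real.sq_sqrt h2πv.le, sq_abs]
  have hcτ : (starRingEnd ℂ) τ = τ - 2 * (v : ℂ) * Complex.I := by
    have h := Complex.sub_conj τ
    push_cast at h ⊢
    linear_combination -h
  have ha2C : ((a : ℂ)) ^ 2 = 2 * (Real.pi : ℂ) * (v : ℂ) * (x : ℂ) ^ 2 := by
    have := congrArg (fun r : ℝ => (r : ℂ)) ha2
    push_cast at this
    exact this
  have hexpeq : Complex.exp (-((a : ℂ) ^ 2))
        * Complex.exp ((starRingEnd ℂ) (2 * (Real.pi : ℂ) * Complex.I * (c * τ)))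
      = Complex.exp (2 * (Real.pi : ℂ) * Complex.I
          * (((x : ℂ) ^ 2 / 2) * τ - ((y : ℂ) ^ 2 / 2) * (starRingEnd ℂ) τ)) := by
    rw [← Complex.exp_add]
    congr 1
    simp only [hc, map_mul, map_ofNat, Complex.conj_I, Complex.conj_ofReal, map_div₀,
      map_sub, map_pow]
    rw [hcτ, ha2C]
    push_cast
    linear_combination (-(2 * (Real.pi : ℂ) * v * x ^ 2)) * Complex.I_sq
  have hrealC : (v : ℂ) * ((Real.sign x : ℝ) : ℂ) * (dE : ℂ)
      = -((Real.sqrt (2 * v) : ℂ) * (x : ℂ) * Complex.exp (-((a : ℂ) ^ 2))) := by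
    have := congrArg (fun r : ℝ => (r : ℂ)) hreal
    push_cast at this
    exact this
  unfold xi phi eC
  rw [hdbar]
  have hconj : (starRingEnd ℂ) (Complex.I / 2 * (A * ((Real.sign x : ℝ) : ℂ) * (dE : ℂ)))
      = -Complex.I / 2 * ((starRingEnd ℂ) A * ((Real.sign x : ℝ) : ℂ) * (dE : ℂ)) := by
    simp only [map_mul, map_div₀, Complex.conj_I, Complex.conj_ofReal, map_ofNat]
  rw [hconj, hconjA]
  linear_combination (Complex.exp ((starRingEnd ℂ) (2 * (Real.pi : ℂ) * Complex.I * (c * τ)))) * hrealC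
    + (-( (Real.sqrt (2 * v) : ℂ)) * (x : ℂ)) * hexpeq
    + (-( (v : ℂ)) * ((Real.sign x : ℝ) : ℂ) * (dE : ℂ)
        * Complex.exp ((starRingEnd ℂ) (2 * (Real.pi : ℂ) * Complex.I * (c * τ)))) * Complex.I_sq


end
end

section
/- For every real y > 0 one has e^{−2πy} = √y · ∫_0^∞ e^{−πy(t² + t^{−2})}·(t + t^{−1}) · dt/t, the integral converging absolutely. -/
open MeasureTheory Filter Set

noncomputable section

/-- `e^{-2πy} = √y·∫_0^∞ e^{-πy(t²+t⁻²)}·(t+t⁻¹) dt/t` for `y > 0`,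
the integral converging absolutely. -/
theorem stmt7 (y : ℝ) (hy : 0 < y) :
    IntegrableOn (fun t : ℝ =>
      Real.exp (-(Real.pi * y * (t ^ 2 + (t⁻¹) ^ 2))) * (t + t⁻¹) / t) (Set.Ioi 0) ∧
    Real.exp (-(2 * Real.pi * y)) =
      Real.sqrt y * ∫ t in Set.Ioi (0 : ℝ),
        Real.exp (-(Real.pi * y * (t ^ 2 + (t⁻¹) ^ 2))) * (t + t⁻¹) / t := by
  have hπy : 0 < Real.pi * y := mul_pos Real.pi_pos hy
  set g : ℝ → ℝ := fun u => Real.exp (-(Real.pi * y * (u ^ 2 + 2))) with hgdef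
  set f : ℝ → ℝ := fun t => t - t⁻¹ with hfdef
  set f' : ℝ → ℝ := fun t => 1 + (t ^ 2)⁻¹ with hf'def
  have hderiv : ∀ t ∈ Set.Ioi (0:ℝ), HasDerivWithinAt f (f' t) (Set.Ioi 0) t := by
    intro t ht
    have ht0 : t ≠ 0 := ne_of_gt ht
    have := (hasDerivAt_id t).sub (hasDerivAt_inv ht0)
    simpa [hfdef, hf'def, sub_neg_eq_add, Pi.sub_def] using this.hasDerivWithinAt
  have hinj : Set.InjOn f (Set.Ioi 0) := by
    intro a ha b hb hab
    have ha0 : (0:ℝ) < a := ha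
    have hb0 : (0:ℝ) < b := hb
    have h1 : (a - b) * (a * b + 1) = 0 := by
      have : a - a⁻¹ = b - b⁻¹ := hab
      field_simp at this
      nlinarith [this]
    have h2 : 0 < a * b + 1 := by nlinarith
    have := mul_eq_zero.mp h1
    rcases this with h | h
    · linarith
    · linarith
  have himg : f '' Set.Ioi 0 = Set.univ := by
    apply Set.eq_univ_of_forall
    intro u
    have h4 : (0:ℝ) < u ^ 2 + 4 := by positivity
    set s := Real.sqrt (u ^ 2 + 4) with hsdef
    have hs2 : s ^ 2 = u ^ 2 + 4 := Real.sq_sqrt (le_of_lt h4)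
    have hs : |u| < s := by
      rw [hsdef, ← Real.sqrt_sq_eq_abs]
      exact Real.sqrt_lt_sqrt (sq_nonneg u) (by linarith)
    have htpos : 0 < (u + s) / 2 := by
      have := neg_abs_le u
      linarith
    refine ⟨(u + s) / 2, htpos, ?_⟩
    have ht0 : (u + s) / 2 ≠ 0 := ne_of_gt htpos
    have hus : u + s ≠ 0 := by intro h; exact absurd (by rw [h]; norm_num : (u+s)/2 = 0) ht0
    show (u + s) / 2 - ((u + s) / 2)⁻¹ = u
    field_simp
    nlinarith [hs2]
  have hgint : Integrable g := by
    have : g = fun u => Real.exp (-(2 * Real.pi * y)) * Real.exp (-(Real.pi * y) * u ^ 2) := by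
      funext u
      rw [hgdef, ← Real.exp_add]
      ring_nf
    rw [this]
    exact (integrable_exp_neg_mul_sq hπy).const_mul _
  have heq : Set.EqOn (fun t => |f' t| • g (f t))
      (fun t : ℝ => Real.exp (-(Real.pi * y * (t ^ 2 + (t⁻¹) ^ 2))) * (t + t⁻¹) / t)
      (Set.Ioi 0) := by
    intro t ht
    have ht0 : t ≠ 0 := ne_of_gt ht
    have ht2 : 0 < (t:ℝ) ^ 2 := by positivity
    have habs : |f' t| = f' t := abs_of_pos (by rw [hf'def]; positivity)
    have hsq : (f t) ^ 2 + 2 = t ^ 2 + (t⁻¹) ^ 2 := by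
      rw [hfdef]
      field_simp
      ring
    simp only [habs, smul_eq_mul, hgdef, hsq]
    rw [hf'def]
    field_simp
  have hmeas : MeasurableSet (Set.Ioi (0:ℝ)) := measurableSet_Ioi
  have hint : IntegrableOn (fun t : ℝ =>
      Real.exp (-(Real.pi * y * (t ^ 2 + (t⁻¹) ^ 2))) * (t + t⁻¹) / t) (Set.Ioi 0) := by
    have := (integrableOn_image_iff_integrableOn_abs_deriv_smul hmeas hderiv hinj g).mp
      (by rw [himg]; exact hgint.integrableOn)
    exact this.congr_fun heq hmeas
  refine ⟨hint, ?_⟩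
  have hchange : ∫ u in f '' Set.Ioi 0, g u = ∫ t in Set.Ioi (0:ℝ), |f' t| • g (f t) :=
    integral_image_eq_integral_abs_deriv_smul hmeas hderiv hinj g
  rw [himg] at hchange
  have hgauss : ∫ u, g u = Real.exp (-(2 * Real.pi * y)) * (Real.sqrt y)⁻¹ := by
    have : (fun u => g u) = fun u => Real.exp (-(2 * Real.pi * y)) * Real.exp (-(Real.pi * y) * u ^ 2) := by
      funext u; rw [hgdef, ← Real.exp_add]; ring_nf
    rw [this, MeasureTheory.integral_const_mul, integral_gaussian]
    congr 1
    rw [show Real.pi / (Real.pi * y) = y⁻¹ by field_simp, Real.sqrt_inv]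
  have hIeq : ∫ t in Set.Ioi (0:ℝ),
      Real.exp (-(Real.pi * y * (t ^ 2 + (t⁻¹) ^ 2))) * (t + t⁻¹) / t
      = Real.exp (-(2 * Real.pi * y)) * (Real.sqrt y)⁻¹ := by
    rw [← setIntegral_congr_fun hmeas heq, ← hchange]
    rw [MeasureTheory.setIntegral_univ] at *
    exact hgauss
  rw [hIeq]
  have hsy : Real.sqrt y ≠ 0 := ne_of_gt (Real.sqrt_pos.mpr hy)
  field_simp
end
end

section
/- Let N be a positive integer, τ ∈ H, and let x₁, x₂ be real numbers with x₁x₂ > 0. Then ∫_0^∞ φ_τ(ι_t(x₁,x₂)) dt/t = sgn(x₁)·e((x₁x₂/N)·τ), the integral converging absolutely. Equivalently, with n := x₁x₂/N: √(v/N)·∫_0^∞ (t^{−1}x₁ + t x₂)·e( n·u + iv·(t^{−2}x₁² + t²x₂²)/(2N) ) dt/t = sgn(x₁)·e(nτ). -/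
open MeasureTheory Filter Set

noncomputable section

/-- The isometry `ι_t(x₁,x₂) = ((t⁻¹x₁+tx₂)/√(2N), (t⁻¹x₁-tx₂)/√(2N))`. -/
def iota (N : ℕ) (t x₁ x₂ : ℝ) : ℝ × ℝ :=
  ((t⁻¹ * x₁ + t * x₂) / Real.sqrt (2 * N), (t⁻¹ * x₁ - t * x₂) / Real.sqrt (2 * N))

open Real


lemma key_real (a x₁ x₂ : ℝ) (ha : 0 < a) (h1 : 0 < x₁) (h2 : 0 < x₂) :
    IntegrableOn (fun t => (x₁ / t ^ 2 + x₂) *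
      Real.exp (-a * (x₁ ^ 2 / t ^ 2 + x₂ ^ 2 * t ^ 2))) (Ioi 0) ∧
    ∫ t in Ioi (0:ℝ), (x₁ / t ^ 2 + x₂) * Real.exp (-a * (x₁ ^ 2 / t ^ 2 + x₂ ^ 2 * t ^ 2)) =
      Real.sqrt (π / a) * Real.exp (-(2 * a * (x₁ * x₂))) := by
  set f : ℝ → ℝ := fun t => x₂ * t - x₁ / t with hf_def
  set f' : ℝ → ℝ := fun t => x₂ + x₁ / t ^ 2 with hf'_def
  set g : ℝ → ℝ := fun s => Real.exp (-a * s ^ 2) * Real.exp (-(2 * a * (x₁ * x₂))) with hg_def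
  have hderiv : ∀ t ∈ Ioi (0:ℝ), HasDerivWithinAt f (f' t) (Ioi 0) t := by
    intro t ht
    have ht0 : (t:ℝ) ≠ 0 := ne_of_gt ht
    have hd : HasDerivAt f (x₂ + x₁ / t ^ 2) t := by
      have hA : HasDerivAt (fun t : ℝ => x₂ * t) x₂ t := by
        simpa using (hasDerivAt_id t).const_mul x₂
      have hB : HasDerivAt (fun t : ℝ => x₁ / t) (x₁ * (-(t ^ 2)⁻¹)) t := by
        simpa [div_eq_mul_inv] using (hasDerivAt_inv ht0).const_mul x₁
      have := hA.sub hB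
      have e : x₂ + x₁ / t ^ 2 = x₂ - x₁ * (-(t ^ 2)⁻¹) := by ring
      rw [e]; exact this
    exact hd.hasDerivWithinAt
  have hinj : InjOn f (Ioi 0) := by
    intro s hs t ht h
    have hs0 : (0:ℝ) < s := hs
    have ht0 : (0:ℝ) < t := ht
    have key : (s - t) * (x₂ * (s * t) + x₁) = 0 := by
      have h' : x₂ * s - x₁ / s = x₂ * t - x₁ / t := h
      field_simp at h'
      nlinarith [h']
    have hpos : 0 < x₂ * (s * t) + x₁ := by positivity
    have := mul_eq_zero.mp key
    rcases this with h0 | h0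
    · linarith
    · linarith
  have himg : f '' Ioi 0 = univ := by
    apply eq_univ_of_forall
    intro y
    have hd : (0:ℝ) ≤ y ^ 2 + 4 * (x₁ * x₂) := by positivity
    set s := Real.sqrt (y ^ 2 + 4 * (x₁ * x₂)) with hs_def
    have hs2 : s ^ 2 = y ^ 2 + 4 * (x₁ * x₂) := Real.sq_sqrt hd
    have hsy : |y| < s := by
      rw [← Real.sqrt_sq_eq_abs]
      exact Real.sqrt_lt_sqrt (sq_nonneg y) (by nlinarith)
    have hty : 0 < y + s := by
      have := neg_abs_le y
      linarith
    refine ⟨(y + s) / (2 * x₂), ?_, ?_⟩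
    · exact div_pos hty (by linarith)
    · have h2' : (2 * x₂) ≠ 0 := by positivity
      have ht0 : (y + s) / (2 * x₂) ≠ 0 := by positivity
      show x₂ * ((y + s) / (2 * x₂)) - x₁ / ((y + s) / (2 * x₂)) = y
      field_simp
      nlinarith [hs2]
  have hgint : Integrable g := (integrable_exp_neg_mul_sq ha).mul_const _
  have hcongr : ∀ t ∈ Ioi (0:ℝ), |f' t| • g (f t) =
      (x₁ / t ^ 2 + x₂) * Real.exp (-a * (x₁ ^ 2 / t ^ 2 + x₂ ^ 2 * t ^ 2)) := by
    intro t ht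
    have ht0 : (0:ℝ) < t := ht
    have hf'pos : 0 < f' t := by
      simp only [hf'_def]; positivity
    rw [abs_of_pos hf'pos]
    simp only [smul_eq_mul, hg_def, hf_def, hf'_def]
    rw [← Real.exp_add]
    have hexp : -a * (x₂ * t - x₁ / t) ^ 2 + -(2 * a * (x₁ * x₂)) =
        -a * (x₁ ^ 2 / t ^ 2 + x₂ ^ 2 * t ^ 2) := by
      field_simp
      ring
    rw [hexp]
    ring
  have him_int : IntegrableOn g (f '' Ioi 0) := by rw [himg]; exact hgint.integrableOn
  have hiff := integrableOn_image_iff_integrableOn_abs_deriv_smul measurableSet_Ioi hderiv hinj g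
  have hInt1 : IntegrableOn (fun t => |f' t| • g (f t)) (Ioi 0) := hiff.mp him_int
  constructor
  · exact hInt1.congr_fun hcongr measurableSet_Ioi
  · rw [← setIntegral_congr_fun measurableSet_Ioi (fun t ht => hcongr t ht)]
    rw [← integral_image_eq_integral_abs_deriv_smul measurableSet_Ioi hderiv hinj g]
    rw [himg]
    rw [show (∫ x in (univ : Set ℝ), g x) = ∫ x, g x by simp]
    rw [hg_def]
    rw [integral_mul_const, integral_gaussian]

lemma eC_add (z w : ℂ) : eC (z + w) = eC z * eC w := by
  simp only [eC, mul_add, Complex.exp_add]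

lemma eC_I_real (r : ℝ) : eC (Complex.I * r) = ((Real.exp (-(2 * π * r)) : ℝ) : ℂ) := by
  have h : (2 : ℂ) * π * Complex.I * (Complex.I * r) = ((-(2 * π * r) : ℝ) : ℂ) := by
    push_cast
    rw [show (2:ℂ) * π * Complex.I * (Complex.I * r) = 2 * π * r * (Complex.I * Complex.I) by ring,
      Complex.I_mul_I]
    ring
  rw [eC, h, Complex.ofReal_exp]

lemma phi_neg (τ : ℂ) (x y : ℝ) : phi τ (-x) (-y) = - phi τ x y := by
  unfold phi
  rw [show ((↑(-x) : ℂ)) = -(x:ℂ) by push_cast; ring,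
    show ((↑(-y) : ℂ)) = -(y:ℂ) by push_cast; ring,
    show (-(x:ℂ)) ^ 2 = (x:ℂ) ^ 2 by ring,
    show (-(y:ℂ)) ^ 2 = (y:ℂ) ^ 2 by ring]
  ring

lemma pointwise1 (N : ℕ) (hN : 0 < N) (τ : ℂ) (hτ : 0 < τ.im) (x₁ x₂ t : ℝ) (ht : 0 < t) :
    phi τ (iota N t x₁ x₂).1 (iota N t x₁ x₂).2 / (t : ℂ) =
      (Real.sqrt (τ.im / N) : ℂ) *
        (((t⁻¹ * x₁ + t * x₂ : ℝ) : ℂ) *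
          eC (((x₁ * x₂ / N : ℝ) : ℂ) * (τ.re : ℂ) +
            Complex.I * (τ.im : ℂ) *
              (((t⁻¹ ^ 2 * x₁ ^ 2 + t ^ 2 * x₂ ^ 2) / (2 * N) : ℝ) : ℂ)) / (t : ℂ)) := by
  have hN0 : (N : ℝ) ≠ 0 := Nat.cast_ne_zero.mpr hN.ne'
  have ht0 : t ≠ 0 := ht.ne'
  simp only [phi, iota]
  set S := Real.sqrt (2 * (N:ℝ)) with hS_def
  have hS2 : S ^ 2 = 2 * N := Real.sq_sqrt (by positivity)
  have hS0 : S ≠ 0 := by rw [hS_def]; positivity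
  set X : ℝ := (t⁻¹ * x₁ + t * x₂) / S with hX_def
  set Y : ℝ := (t⁻¹ * x₁ - t * x₂) / S with hY_def
  have hR1 : X ^ 2 - Y ^ 2 = 2 * (x₁ * x₂ / N) := by
    rw [hX_def, hY_def, div_pow, div_pow, ← sub_div, hS2]
    field_simp
    ring
  have hR2 : X ^ 2 + Y ^ 2 = 2 * ((t⁻¹ ^ 2 * x₁ ^ 2 + t ^ 2 * x₂ ^ 2) / (2 * N)) := by
    rw [hX_def, hY_def, div_pow, div_pow, ← add_div, hS2]
    field_simp
    ring
  have e1 : (X : ℂ) ^ 2 - (Y : ℂ) ^ 2 = 2 * ((x₁ * x₂ / N : ℝ) : ℂ) := by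
    exact_mod_cast congrArg (fun r : ℝ => (r : ℂ)) hR1
  have e2 : (X : ℂ) ^ 2 + (Y : ℂ) ^ 2 =
      2 * (((t⁻¹ ^ 2 * x₁ ^ 2 + t ^ 2 * x₂ ^ 2) / (2 * N) : ℝ) : ℂ) := by
    exact_mod_cast congrArg (fun r : ℝ => (r : ℂ)) hR2
  have hconj : (starRingEnd ℂ) τ = (τ.re : ℂ) - (τ.im : ℂ) * Complex.I := by
    apply Complex.ext <;> simp
  have harg : ((X : ℂ) ^ 2 / 2) * τ - ((Y : ℂ) ^ 2 / 2) * (starRingEnd ℂ) τ =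
      ((x₁ * x₂ / N : ℝ) : ℂ) * (τ.re : ℂ) +
        Complex.I * (τ.im : ℂ) *
          (((t⁻¹ ^ 2 * x₁ ^ 2 + t ^ 2 * x₂ ^ 2) / (2 * N) : ℝ) : ℂ) := by
    rw [hconj]
    nth_rewrite 1 [← Complex.re_add_im τ]
    linear_combination ((τ.re : ℂ) / 2) * e1 + (Complex.I * (τ.im : ℂ) / 2) * e2
  have hcoef : Real.sqrt (2 * τ.im) * X = Real.sqrt (τ.im / N) * (t⁻¹ * x₁ + t * x₂) := by
    rw [show τ.im / (N:ℝ) = (2 * τ.im) / (2 * N) by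
      rw [mul_div_mul_left _ _ (two_ne_zero)],
      Real.sqrt_div (by linarith : (0:ℝ) ≤ 2 * τ.im), hX_def, ← hS_def]
    ring
  have hcoefC : ((Real.sqrt (2 * τ.im) : ℝ) : ℂ) * (X : ℂ) =
      ((Real.sqrt (τ.im / N) : ℝ) : ℂ) * ((t⁻¹ * x₁ + t * x₂ : ℝ) : ℂ) := by
    exact_mod_cast congrArg (fun r : ℝ => (r : ℂ)) hcoef
  rw [harg, show ((Real.sqrt (2 * τ.im) : ℝ) : ℂ) * (X : ℂ) *
      eC (((x₁ * x₂ / N : ℝ) : ℂ) * (τ.re : ℂ) +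
        Complex.I * (τ.im : ℂ) *
          (((t⁻¹ ^ 2 * x₁ ^ 2 + t ^ 2 * x₂ ^ 2) / (2 * N) : ℝ) : ℂ)) =
      ((Real.sqrt (τ.im / N) : ℝ) : ℂ) * ((t⁻¹ * x₁ + t * x₂ : ℝ) : ℂ) *
      eC (((x₁ * x₂ / N : ℝ) : ℂ) * (τ.re : ℂ) +
        Complex.I * (τ.im : ℂ) *
          (((t⁻¹ ^ 2 * x₁ ^ 2 + t ^ 2 * x₂ ^ 2) / (2 * N) : ℝ) : ℂ)) by rw [hcoefC]]
  ring


lemma pointwise2 (N : ℕ) (hN : 0 < N) (τ : ℂ) (x₁ x₂ t : ℝ) (ht : 0 < t) :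
    ((t⁻¹ * x₁ + t * x₂ : ℝ) : ℂ) *
      eC (((x₁ * x₂ / N : ℝ) : ℂ) * (τ.re : ℂ) +
        Complex.I * (τ.im : ℂ) *
          (((t⁻¹ ^ 2 * x₁ ^ 2 + t ^ 2 * x₂ ^ 2) / (2 * N) : ℝ) : ℂ)) / (t : ℂ) =
    eC ((x₁ * x₂ / N * τ.re : ℝ) : ℂ) *
      (((x₁ / t ^ 2 + x₂) *
        Real.exp (-(Real.pi * τ.im / N) * (x₁ ^ 2 / t ^ 2 + x₂ ^ 2 * t ^ 2)) : ℝ) : ℂ) := by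
  have hN0 : (N : ℝ) ≠ 0 := Nat.cast_ne_zero.mpr hN.ne'
  have ht0 : t ≠ 0 := ht.ne'
  have htC : (t : ℂ) ≠ 0 := by exact_mod_cast ht0
  rw [show Complex.I * (τ.im : ℂ) *
        (((t⁻¹ ^ 2 * x₁ ^ 2 + t ^ 2 * x₂ ^ 2) / (2 * N) : ℝ) : ℂ)
      = Complex.I * ((τ.im * ((t⁻¹ ^ 2 * x₁ ^ 2 + t ^ 2 * x₂ ^ 2) / (2 * N)) : ℝ) : ℂ) by
        push_cast; ring]
  rw [eC_add, eC_I_real]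
  rw [show (((x₁ * x₂ / N : ℝ)) : ℂ) * ((τ.re : ℂ)) = (((x₁ * x₂ / N * τ.re : ℝ)) : ℂ) by
    push_cast; ring]
  rw [show Real.exp (-(2 * π * (τ.im * ((t⁻¹ ^ 2 * x₁ ^ 2 + t ^ 2 * x₂ ^ 2) / (2 * N)))))
      = Real.exp (-(Real.pi * τ.im / N) * (x₁ ^ 2 / t ^ 2 + x₂ ^ 2 * t ^ 2)) by
        congr 1; field_simp]
  rw [show ((x₁ / t ^ 2 + x₂) *
        Real.exp (-(Real.pi * τ.im / N) * (x₁ ^ 2 / t ^ 2 + x₂ ^ 2 * t ^ 2)) : ℝ)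
      = ((x₁ / t ^ 2 + x₂) : ℝ) * Real.exp (-(Real.pi * τ.im / N) * (x₁ ^ 2 / t ^ 2 + x₂ ^ 2 * t ^ 2)) from rfl]
  rw [Complex.ofReal_mul]
  rw [show ((t⁻¹ * x₁ + t * x₂ : ℝ) : ℂ) = ((x₁ / t ^ 2 + x₂ : ℝ) : ℂ) * (t : ℂ) by
    push_cast; field_simp]
  field_simp
  push_cast
  ring

lemma main_pos (N : ℕ) (hN : 0 < N) (τ : ℂ) (hτ : 0 < τ.im) (x₁ x₂ : ℝ)
    (h1 : 0 < x₁) (h2 : 0 < x₂) :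
    IntegrableOn (fun t : ℝ =>
      phi τ (iota N t x₁ x₂).1 (iota N t x₁ x₂).2 / (t : ℂ)) (Set.Ioi 0) ∧
    (∫ t in Set.Ioi (0 : ℝ), phi τ (iota N t x₁ x₂).1 (iota N t x₁ x₂).2 / (t : ℂ)) =
      (Real.sign x₁ : ℂ) * eC (((x₁ * x₂ / N : ℝ) : ℂ) * τ) ∧
    (Real.sqrt (τ.im / N) : ℂ) * ∫ t in Set.Ioi (0 : ℝ),
        ((t⁻¹ * x₁ + t * x₂ : ℝ) : ℂ) *
          eC (((x₁ * x₂ / N : ℝ) : ℂ) * (τ.re : ℂ) +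
            Complex.I * (τ.im : ℂ) *
              (((t⁻¹ ^ 2 * x₁ ^ 2 + t ^ 2 * x₂ ^ 2) / (2 * N) : ℝ) : ℂ)) / (t : ℂ) =
      (Real.sign x₁ : ℂ) * eC (((x₁ * x₂ / N : ℝ) : ℂ) * τ) := by
  have hN0 : (N : ℝ) ≠ 0 := Nat.cast_ne_zero.mpr hN.ne'
  have ha : 0 < Real.pi * τ.im / N := by positivity
  set a := Real.pi * τ.im / N with ha_def
  obtain ⟨hint, hval⟩ := key_real a x₁ x₂ ha h1 h2
  set G : ℝ → ℝ := fun t => (x₁ / t ^ 2 + x₂) *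
    Real.exp (-a * (x₁ ^ 2 / t ^ 2 + x₂ ^ 2 * t ^ 2)) with hG_def
  set c0 : ℂ := (Real.sqrt (τ.im / N) : ℂ) * eC ((x₁ * x₂ / N * τ.re : ℝ) : ℂ) with hc0
  have hfull : ∀ t ∈ Ioi (0:ℝ),
      phi τ (iota N t x₁ x₂).1 (iota N t x₁ x₂).2 / (t : ℂ) = c0 * (G t : ℂ) := by
    intro t ht
    rw [pointwise1 N hN τ hτ x₁ x₂ t ht, pointwise2 N hN τ x₁ x₂ t ht, hc0, hG_def]
    ring
  have hintC : IntegrableOn (fun t => c0 * (G t : ℂ)) (Ioi 0) := hint.ofReal.const_mul c0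
  have hI : IntegrableOn (fun t : ℝ =>
      phi τ (iota N t x₁ x₂).1 (iota N t x₁ x₂).2 / (t : ℂ)) (Ioi 0) :=
    hintC.congr_fun (fun t ht => (hfull t ht).symm) measurableSet_Ioi
  have hval2 : (∫ t in Ioi (0:ℝ), phi τ (iota N t x₁ x₂).1 (iota N t x₁ x₂).2 / (t : ℂ)) =
      c0 * (((Real.sqrt (π / a) : ℝ) : ℂ) * ((Real.exp (-(2 * a * (x₁ * x₂))) : ℝ) : ℂ)) := by
    rw [setIntegral_congr_fun measurableSet_Ioi hfull, integral_const_mul]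
    have hio : (∫ t in Ioi (0:ℝ), ((G t : ℝ) : ℂ)) = ((∫ t in Ioi (0:ℝ), G t : ℝ) : ℂ) :=
      integral_ofReal
    rw [hio, hval]
    push_cast
    ring
  have hsqrt : Real.sqrt (τ.im / N) * Real.sqrt (π / a) = 1 := by
    rw [← Real.sqrt_mul (by positivity)]
    rw [show (τ.im / N) * (π / a) = 1 by rw [ha_def]; field_simp]
    exact Real.sqrt_one
  have hsqrtC : ((Real.sqrt (τ.im / N) : ℝ) : ℂ) * ((Real.sqrt (π / a) : ℝ) : ℂ) = 1 := by
    exact_mod_cast congrArg (fun r : ℝ => (r : ℂ)) hsqrt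
  have heC : eC (((x₁ * x₂ / N : ℝ) : ℂ) * τ) =
      eC ((x₁ * x₂ / N * τ.re : ℝ) : ℂ) * ((Real.exp (-(2 * a * (x₁ * x₂))) : ℝ) : ℂ) := by
    rw [show ((x₁ * x₂ / N : ℝ) : ℂ) * τ =
        ((x₁ * x₂ / N * τ.re : ℝ) : ℂ) + Complex.I * ((x₁ * x₂ / N * τ.im : ℝ) : ℂ) by
      nth_rewrite 1 [← Complex.re_add_im τ]; push_cast; ring]
    rw [eC_add, eC_I_real,
      show (-(2 * π * (x₁ * x₂ / N * τ.im))) = (-(2 * a * (x₁ * x₂))) by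
        rw [ha_def]; ring]
  have hfinal : c0 * (((Real.sqrt (π / a) : ℝ) : ℂ) * ((Real.exp (-(2 * a * (x₁ * x₂))) : ℝ) : ℂ)) =
      (Real.sign x₁ : ℂ) * eC (((x₁ * x₂ / N : ℝ) : ℂ) * τ) := by
    rw [Real.sign_of_pos h1, heC, hc0, Complex.ofReal_one]
    linear_combination (eC ((x₁ * x₂ / N * τ.re : ℝ) : ℂ) *
      ((Real.exp (-(2 * a * (x₁ * x₂))) : ℝ) : ℂ)) * hsqrtC
  refine ⟨hI, hval2.trans hfinal, ?_⟩
  rw [← integral_const_mul]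
  rw [setIntegral_congr_fun measurableSet_Ioi
    (fun t ht => (pointwise1 N hN τ hτ x₁ x₂ t ht).symm)]
  exact hval2.trans hfinal

/-- for `x₁x₂ > 0`, `∫_0^∞ φ_τ(ι_t(x₁,x₂)) dt/t = sgn(x₁)·e((x₁x₂/N)τ)`,
the integral converging absolutely; equivalently, with `n = x₁x₂/N`,
`√(v/N)·∫_0^∞ (t⁻¹x₁+tx₂)·e(nu + iv(t⁻²x₁²+t²x₂²)/(2N)) dt/t = sgn(x₁)·e(nτ)`. -/
theorem stmt8 (N : ℕ) (hN : 0 < N) (τ : ℂ) (hτ : 0 < τ.im) (x₁ x₂ : ℝ)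
    (hx : 0 < x₁ * x₂) :
    IntegrableOn (fun t : ℝ =>
      phi τ (iota N t x₁ x₂).1 (iota N t x₁ x₂).2 / (t : ℂ)) (Set.Ioi 0) ∧
    (∫ t in Set.Ioi (0 : ℝ), phi τ (iota N t x₁ x₂).1 (iota N t x₁ x₂).2 / (t : ℂ)) =
      (Real.sign x₁ : ℂ) * eC (((x₁ * x₂ / N : ℝ) : ℂ) * τ) ∧
    (Real.sqrt (τ.im / N) : ℂ) * ∫ t in Set.Ioi (0 : ℝ),
        ((t⁻¹ * x₁ + t * x₂ : ℝ) : ℂ) *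
          eC (((x₁ * x₂ / N : ℝ) : ℂ) * (τ.re : ℂ) +
            Complex.I * (τ.im : ℂ) *
              (((t⁻¹ ^ 2 * x₁ ^ 2 + t ^ 2 * x₂ ^ 2) / (2 * N) : ℝ) : ℂ)) / (t : ℂ) =
      (Real.sign x₁ : ℂ) * eC (((x₁ * x₂ / N : ℝ) : ℂ) * τ) := by
  rcases lt_trichotomy x₁ 0 with h1 | h1 | h1
  · have h2 : x₂ < 0 := by nlinarith
    obtain ⟨I1, E1, E2⟩ := main_pos N hN τ hτ (-x₁) (-x₂) (by linarith) (by linarith)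
    rw [show ((-x₁) * (-x₂) / (N:ℝ)) = x₁ * x₂ / N by ring] at E1 E2
    have hfun : (fun t : ℝ =>
        phi τ (iota N t (-x₁) (-x₂)).1 (iota N t (-x₁) (-x₂)).2 / (t : ℂ))
        = fun t : ℝ => -(phi τ (iota N t x₁ x₂).1 (iota N t x₁ x₂).2 / (t : ℂ)) := by
      funext t
      have hi1 : (iota N t (-x₁) (-x₂)).1 = -(iota N t x₁ x₂).1 := by
        simp only [iota]; ring
      have hi2 : (iota N t (-x₁) (-x₂)).2 = -(iota N t x₁ x₂).2 := by
        simp only [iota]; ring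
      rw [hi1, hi2, phi_neg]
      ring
    rw [hfun] at I1 E1
    rw [integral_neg] at E1
    have hsignm : ((Real.sign (-x₁) : ℝ) : ℂ) = 1 := by
      rw [Real.sign_of_pos (by linarith : (0:ℝ) < -x₁)]; norm_num
    have hsign : ((Real.sign x₁ : ℝ) : ℂ) = -1 := by
      rw [Real.sign_of_neg h1]; norm_num
    rw [hsignm] at E1 E2
    have hH : (fun t : ℝ => ((t⁻¹ * (-x₁) + t * (-x₂) : ℝ) : ℂ) *
          eC (((x₁ * x₂ / N : ℝ) : ℂ) * (τ.re : ℂ) +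
            Complex.I * (τ.im : ℂ) *
              (((t⁻¹ ^ 2 * (-x₁) ^ 2 + t ^ 2 * (-x₂) ^ 2) / (2 * N) : ℝ) : ℂ)) / (t : ℂ))
        = fun t : ℝ => -(((t⁻¹ * x₁ + t * x₂ : ℝ) : ℂ) *
          eC (((x₁ * x₂ / N : ℝ) : ℂ) * (τ.re : ℂ) +
            Complex.I * (τ.im : ℂ) *
              (((t⁻¹ ^ 2 * x₁ ^ 2 + t ^ 2 * x₂ ^ 2) / (2 * N) : ℝ) : ℂ)) / (t : ℂ)) := by
      funext t
      rw [show ((t⁻¹ ^ 2 * (-x₁) ^ 2 + t ^ 2 * (-x₂) ^ 2) / (2 * (N:ℝ)))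
          = ((t⁻¹ ^ 2 * x₁ ^ 2 + t ^ 2 * x₂ ^ 2) / (2 * N)) by ring,
        show ((t⁻¹ * (-x₁) + t * (-x₂) : ℝ) : ℂ) = -((t⁻¹ * x₁ + t * x₂ : ℝ) : ℂ) by
          push_cast; ring]
      ring
    rw [hH] at E2
    rw [integral_neg] at E2
    refine ⟨?_, ?_, ?_⟩
    · have h : IntegrableOn (-(fun t : ℝ =>
          -(phi τ (iota N t x₁ x₂).1 (iota N t x₁ x₂).2 / (t : ℂ)))) (Ioi 0) := I1.neg
      exact h.congr_fun (fun t _ => by simp) measurableSet_Ioi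
    · rw [hsign]
      linear_combination -E1
    · rw [hsign]
      linear_combination -E2
  · exact absurd hx (by rw [h1]; simp)
  · have h2 : 0 < x₂ := by nlinarith
    exact main_pos N hN τ hτ x₁ x₂ h1 h2

end
end

section
/- Let N be a positive integer, τ ∈ H, and let x₁, x₂ be real numbers with x₁x₂ < 0; set n := −x₁x₂/N > 0. For real s > 0 define I⁺(s) := ∫_1^∞ φ⁺_τ(ι_t(x₁,x₂))·t^{−s} dt/t + ∫_0^1 φ⁺_τ(ι_t(x₁,x₂))·t^{s} dt/t. Then each integral converges absolutely for s > 0, and lim_{s→0⁺} I⁺(s) = sgn(x₁)·log|x₁/x₂|·e(nτ). -/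
open MeasureTheory Filter Set

noncomputable section

/-- `φ⁺_τ(x,y) = e(((y²-x²)/2)τ)·sgn(x)·1_{y²>x²}`. -/
def phiPlus (τ : ℂ) (x y : ℝ) : ℂ :=
  eC ((((y : ℂ) ^ 2 - (x : ℂ) ^ 2) / 2) * τ) * (Real.sign x : ℂ) *
    (if x ^ 2 < y ^ 2 then 1 else 0)

private lemma lim_exp_div (a : ℝ) :
    Tendsto (fun s : ℝ => (Real.exp (s * a) - 1) / s) (nhdsWithin 0 (Set.Ioi 0)) (nhds a) := by
  have h : HasDerivAt (fun s : ℝ => Real.exp (s * a)) a 0 := by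
    have := (Real.hasDerivAt_exp ((0:ℝ)*a)).comp 0 ((hasDerivAt_id (0:ℝ)).mul_const a)
    simpa using ((hasDerivAt_id (0:ℝ)).mul_const a).exp
  have h2 := hasDerivAt_iff_tendsto_slope.mp h
  have h3 : Tendsto (slope (fun s : ℝ => Real.exp (s * a)) 0) (nhdsWithin 0 (Set.Ioi 0)) (nhds a) :=
    h2.mono_left (nhdsWithin_mono _ (fun x hx => (ne_of_gt hx : x ≠ 0)))
  refine h3.congr (fun s => ?_)
  simp [slope_def_field, div_eq_mul_inv]

private lemma int_Ioi_rpow' {s c : ℝ} (hs : 0 < s) (hc : 0 < c) :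
    ∫ t in Set.Ioi c, t ^ (-s - 1) = c ^ (-s) / s := by
  rw [integral_Ioi_rpow_of_lt (by linarith) hc,
    show (-s - 1 + 1 : ℝ) = -s by ring, neg_div, div_neg, neg_neg]

private lemma int_Ioo_zero_rpow {s b : ℝ} (hs : 0 < s) (hb : 0 < b) :
    ∫ t in Set.Ioo 0 b, t ^ (s - 1) = b ^ s / s := by
  rw [← integral_Ioc_eq_integral_Ioo, ← intervalIntegral.integral_of_le hb.le,
    integral_rpow (Or.inl (by linarith)), show (s - 1 + 1 : ℝ) = s by ring,
    Real.zero_rpow hs.ne', sub_zero]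

private lemma int_Ioc_rpow_neg {s a b : ℝ} (hs : 0 < s) (ha : 0 < a) (hab : a ≤ b) :
    ∫ t in Set.Ioc a b, t ^ (-s - 1) = (a ^ (-s) - b ^ (-s)) / s := by
  rw [← intervalIntegral.integral_of_le hab,
    integral_rpow (Or.inr ⟨by intro h; exact hs.ne' (by linarith : s = 0),
      Set.notMem_uIcc_of_lt ha (ha.trans_le hab)⟩),
    show (-s - 1 + 1 : ℝ) = -s by ring, div_neg, ← neg_div, neg_sub]

private lemma int_Ioc_rpow_pos {s a b : ℝ} (hs : 0 < s) (hab : a ≤ b) :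
    ∫ t in Set.Ioc a b, t ^ (s - 1) = (b ^ s - a ^ s) / s := by
  rw [← intervalIntegral.integral_of_le hab, integral_rpow (Or.inl (by linarith)),
    show (s - 1 + 1 : ℝ) = s by ring]

private def chi (T t : ℝ) : ℝ := if t < T then 1 else if t = T then 0 else -1

private lemma chi_of_lt {T t : ℝ} (h : t < T) : chi T t = 1 := if_pos h

private lemma chi_self {T : ℝ} : chi T T = 0 := by simp [chi]

private lemma chi_of_gt {T t : ℝ} (h : T < t) : chi T t = -1 := by
  simp [chi, not_lt.mpr h.le, h.ne']

private lemma chi_abs_le (T t : ℝ) : |chi T t| ≤ 1 := by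
  unfold chi; split_ifs <;> norm_num

private lemma chi_measurable (T : ℝ) : Measurable (chi T) := by
  unfold chi
  exact Measurable.ite (measurableSet_lt measurable_id measurable_const) measurable_const
    (Measurable.ite measurableSet_eq measurable_const measurable_const)

private lemma measurable_rpow_const' (r : ℝ) : Measurable fun t : ℝ => t ^ r := by
  refine measurable_of_continuousOn_compl_singleton (0 : ℝ) ?_
  intro x hx
  exact (Real.continuousAt_rpow_const x r (Or.inl hx)).continuousWithinAt

set_option maxHeartbeats 1600000

/-- with `x₁x₂ < 0` and `n = -x₁x₂/N`, the regularized integral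
`I⁺(s) = ∫_1^∞ φ⁺_τ(ι_t(x₁,x₂))·t^{-s} dt/t + ∫_0^1 φ⁺_τ(ι_t(x₁,x₂))·t^{s} dt/t`
converges absolutely for `s > 0` and tends to `sgn(x₁)·log|x₁/x₂|·e(nτ)` as `s → 0⁺`. -/
theorem stmt15 (N : ℕ) (hN : 0 < N) (τ : ℂ) (hτ : 0 < τ.im) (x₁ x₂ : ℝ)
    (hx : x₁ * x₂ < 0) :
    (∀ s : ℝ, 0 < s →
      IntegrableOn (fun t : ℝ =>
        phiPlus τ (iota N t x₁ x₂).1 (iota N t x₁ x₂).2 * ((t ^ (-s) : ℝ) : ℂ) / (t : ℂ))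
        (Set.Ioi 1) ∧
      IntegrableOn (fun t : ℝ =>
        phiPlus τ (iota N t x₁ x₂).1 (iota N t x₁ x₂).2 * ((t ^ s : ℝ) : ℂ) / (t : ℂ))
        (Set.Ioo 0 1)) ∧
    Tendsto (fun s : ℝ =>
        (∫ t in Set.Ioi (1 : ℝ),
          phiPlus τ (iota N t x₁ x₂).1 (iota N t x₁ x₂).2 * ((t ^ (-s) : ℝ) : ℂ) / (t : ℂ)) +
        ∫ t in Set.Ioo (0 : ℝ) 1,
          phiPlus τ (iota N t x₁ x₂).1 (iota N t x₁ x₂).2 * ((t ^ s : ℝ) : ℂ) / (t : ℂ))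
      (nhdsWithin 0 (Set.Ioi 0))
      (nhds ((Real.sign x₁ : ℂ) * (Real.log |x₁ / x₂| : ℂ) *
        eC (((-(x₁ * x₂) / N : ℝ) : ℂ) * τ))) := by
  have hx₁ : x₁ ≠ 0 := fun h => by simp [h] at hx
  have hx₂ : x₂ ≠ 0 := fun h => by simp [h] at hx
  have hRpos : 0 < -x₁ / x₂ := by
    rcases lt_or_gt_of_ne hx₂ with h2 | h2
    · have h1 : 0 < x₁ := by nlinarith
      exact div_pos_of_neg_of_neg (by linarith) h2
    · have h1 : x₁ < 0 := by nlinarith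
      exact div_pos (by linarith) h2
  set T : ℝ := Real.sqrt (-x₁ / x₂) with hTdef
  have hTpos : 0 < T := Real.sqrt_pos.mpr hRpos
  have hT2 : T ^ 2 = -x₁ / x₂ := Real.sq_sqrt hRpos.le
  have hx₁eq : x₁ = x₂ * (-T ^ 2) := by rw [hT2]; field_simp
  set σ : ℝ := Real.sign x₁ with hσdef
  set c : ℂ := eC (((-(x₁ * x₂) / N : ℝ) : ℂ) * τ) with hcdef
  have hχmeas : Measurable (chi T) := chi_measurable T
  have hχle : ∀ t, |chi T t| ≤ 1 := chi_abs_le T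
  have hsqrt2N : 0 < Real.sqrt (2 * (N : ℝ)) := Real.sqrt_pos.mpr (by positivity)
  have h2N : Real.sqrt (2 * (N : ℝ)) ^ 2 = 2 * (N : ℝ) := Real.sq_sqrt (by positivity)
  have hNne : (N : ℝ) ≠ 0 := Nat.cast_ne_zero.mpr hN.ne'
  -- the sign computation
  have hsign : ∀ t : ℝ, 0 < t →
      Real.sign ((t⁻¹ * x₁ + t * x₂) / Real.sqrt (2 * (N : ℝ))) = σ * chi T t := by
    intro t ht
    have hrepr : (t⁻¹ * x₁ + t * x₂) / Real.sqrt (2 * (N : ℝ))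
        = (x₂ * (t ^ 2 - T ^ 2)) / (t * Real.sqrt (2 * (N : ℝ))) := by
      rw [hx₁eq]; field_simp; ring
    have hden : 0 < t * Real.sqrt (2 * (N : ℝ)) := by positivity
    rcases lt_trichotomy t T with h | h | h
    · have hχt : chi T t = 1 := chi_of_lt h
      have hfac : t ^ 2 - T ^ 2 < 0 := by nlinarith
      rw [hrepr, hχt, mul_one]
      rcases lt_or_gt_of_ne hx₂ with h2 | h2
      · rw [Real.sign_of_pos (div_pos (mul_pos_of_neg_of_neg h2 hfac) hden), hσdef,
          Real.sign_of_pos (show 0 < x₁ by nlinarith)]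
      · rw [Real.sign_of_neg (div_neg_of_neg_of_pos (mul_neg_of_pos_of_neg h2 hfac) hden),
          hσdef, Real.sign_of_neg (show x₁ < 0 by nlinarith)]
    · have hχt : chi T t = 0 := by rw [h]; exact chi_self
      rw [hrepr, hχt, mul_zero, h]
      simp [Real.sign_zero]
    · have hχt : chi T t = -1 := chi_of_gt h
      have hfac : 0 < t ^ 2 - T ^ 2 := by nlinarith
      rw [hrepr, hχt]
      rcases lt_or_gt_of_ne hx₂ with h2 | h2
      · rw [Real.sign_of_neg (div_neg_of_neg_of_pos (mul_neg_of_neg_of_pos h2 hfac) hden),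
          hσdef, Real.sign_of_pos (show 0 < x₁ by nlinarith)]
        ring
      · rw [Real.sign_of_pos (div_pos (mul_pos h2 hfac) hden), hσdef,
          Real.sign_of_neg (show x₁ < 0 by nlinarith)]
        ring
  -- pointwise identity for phiPlus along iota
  have hkey : ∀ t : ℝ, 0 < t →
      phiPlus τ (iota N t x₁ x₂).1 (iota N t x₁ x₂).2 = ((σ * chi T t : ℝ) : ℂ) * c := by
    intro t ht
    have ht' : t ≠ 0 := ht.ne'
    have hdiff : ((t⁻¹ * x₁ - t * x₂) / Real.sqrt (2 * (N : ℝ))) ^ 2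
        - ((t⁻¹ * x₁ + t * x₂) / Real.sqrt (2 * (N : ℝ))) ^ 2 = -(x₁ * x₂) / N * 2 := by
      rw [div_pow, div_pow, div_sub_div_same, h2N]
      field_simp
      ring
    have hposn : 0 < -(x₁ * x₂) / (N : ℝ) * 2 := by
      have h0 : 0 < -(x₁ * x₂) := by linarith
      positivity
    rw [phiPlus, if_pos (show (iota N t x₁ x₂).1 ^ 2 < (iota N t x₁ x₂).2 ^ 2 by
      simp only [iota]; nlinarith)]
    simp only [iota]
    have hargC : ((((t⁻¹ * x₁ - t * x₂) / Real.sqrt (2 * (N : ℝ)) : ℝ) : ℂ) ^ 2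
        - (((t⁻¹ * x₁ + t * x₂) / Real.sqrt (2 * (N : ℝ)) : ℝ) : ℂ) ^ 2) / 2
        = ((-(x₁ * x₂) / N : ℝ) : ℂ) := by
      rw [show ((((t⁻¹ * x₁ - t * x₂) / Real.sqrt (2 * (N : ℝ)) : ℝ) : ℂ) ^ 2
          - (((t⁻¹ * x₁ + t * x₂) / Real.sqrt (2 * (N : ℝ)) : ℝ) : ℂ) ^ 2) / 2
          = (((((t⁻¹ * x₁ - t * x₂) / Real.sqrt (2 * (N : ℝ))) ^ 2
          - ((t⁻¹ * x₁ + t * x₂) / Real.sqrt (2 * (N : ℝ))) ^ 2) / 2 : ℝ) : ℂ) by push_cast; ring]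
      norm_cast
      push_cast
      linarith
    rw [hargC, hsign t ht, mul_one, hcdef]
    push_cast
    ring
  -- rewriting the integrands
  have hfeq1 : ∀ s : ℝ, ∀ t ∈ Set.Ioi (1:ℝ),
      phiPlus τ (iota N t x₁ x₂).1 (iota N t x₁ x₂).2 * ((t ^ (-s) : ℝ) : ℂ) / (t : ℂ)
        = ((σ * chi T t * t ^ (-s - 1) : ℝ) : ℂ) * c := by
    intro s t ht
    have ht0 : (0:ℝ) < t := lt_trans zero_lt_one ht
    have hr : σ * chi T t * t ^ (-s - 1) = σ * chi T t * t ^ (-s) / t := by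
      rw [show (-s - 1 : ℝ) = -s + (-1) by ring, Real.rpow_add ht0, Real.rpow_neg_one]
      ring
    rw [hkey t ht0, hr]
    simp only [Complex.ofReal_mul, Complex.ofReal_div]
    ring
  have hfeq0 : ∀ s : ℝ, ∀ t ∈ Set.Ioo (0:ℝ) 1,
      phiPlus τ (iota N t x₁ x₂).1 (iota N t x₁ x₂).2 * ((t ^ s : ℝ) : ℂ) / (t : ℂ)
        = ((σ * chi T t * t ^ (s - 1) : ℝ) : ℂ) * c := by
    intro s t ht
    have ht0 : (0:ℝ) < t := ht.1
    have hr : σ * chi T t * t ^ (s - 1) = σ * chi T t * t ^ s / t := by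
      rw [show (s - 1 : ℝ) = s + (-1) by ring, Real.rpow_add ht0, Real.rpow_neg_one]
      ring
    rw [hkey t ht0, hr]
    simp only [Complex.ofReal_mul, Complex.ofReal_div]
    ring
  -- integrability of the χ-integrands
  have hbase : ∀ (r : ℝ) (S : Set ℝ), MeasurableSet S → S ⊆ Set.Ioi 0 →
      IntegrableOn (fun t : ℝ => t ^ r) S → IntegrableOn (fun t : ℝ => chi T t * t ^ r) S := by
    intro r S hSm hS hint
    refine hint.mono' ((hχmeas.mul (measurable_rpow_const' r)).aestronglyMeasurable) ?_
    filter_upwards [ae_restrict_mem hSm] with t ht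
    have htr : 0 ≤ t ^ r := Real.rpow_nonneg (le_of_lt (hS ht)) r
    rw [Real.norm_eq_abs, abs_mul, abs_of_nonneg htr]
    nlinarith [hχle t, abs_nonneg (chi T t)]
  have hχint1 : ∀ s : ℝ, 0 < s → IntegrableOn (fun t : ℝ => chi T t * t ^ (-s - 1)) (Set.Ioi 1) :=
    fun s hs => hbase _ _ measurableSet_Ioi (fun t ht => Set.mem_Ioi.mpr (lt_trans zero_lt_one ht))
      (integrableOn_Ioi_rpow_of_lt (by linarith) zero_lt_one)
  have hχint0 : ∀ s : ℝ, 0 < s → IntegrableOn (fun t : ℝ => chi T t * t ^ (s - 1)) (Set.Ioc 0 1) :=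
    fun s hs => hbase _ _ measurableSet_Ioc (fun t ht => ht.1)
      ((intervalIntegrable_iff_integrableOn_Ioc_of_le zero_le_one).mp
        (intervalIntegral.intervalIntegrable_rpow' (by linarith)))
  -- complex integrability
  have hCi1 : ∀ s : ℝ, 0 < s →
      IntegrableOn (fun t : ℝ => ((σ * chi T t * t ^ (-s - 1) : ℝ) : ℂ) * c) (Set.Ioi 1) := by
    intro s hs
    have h1 : IntegrableOn (fun t : ℝ => σ * chi T t * t ^ (-s - 1)) (Set.Ioi 1) := by
      simpa [mul_assoc, IntegrableOn] using (hχint1 s hs).const_mul σ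
    exact h1.ofReal.mul_const c
  have hCi0 : ∀ s : ℝ, 0 < s →
      IntegrableOn (fun t : ℝ => ((σ * chi T t * t ^ (s - 1) : ℝ) : ℂ) * c) (Set.Ioo 0 1) := by
    intro s hs
    have h1 : IntegrableOn (fun t : ℝ => σ * chi T t * t ^ (s - 1)) (Set.Ioo 0 1) := by
      simpa [mul_assoc, IntegrableOn] using ((hχint0 s hs).mono_set Set.Ioo_subset_Ioc_self).const_mul σ
    exact h1.ofReal.mul_const c
  have hIntegrable : ∀ s : ℝ, 0 < s →
      IntegrableOn (fun t : ℝ =>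
        phiPlus τ (iota N t x₁ x₂).1 (iota N t x₁ x₂).2 * ((t ^ (-s) : ℝ) : ℂ) / (t : ℂ))
        (Set.Ioi 1) ∧
      IntegrableOn (fun t : ℝ =>
        phiPlus τ (iota N t x₁ x₂).1 (iota N t x₁ x₂).2 * ((t ^ s : ℝ) : ℂ) / (t : ℂ))
        (Set.Ioo 0 1) := by
    intro s hs
    constructor
    · exact (hCi1 s hs).congr_fun (fun t ht => (hfeq1 s t ht).symm) measurableSet_Ioi
    · exact (hCi0 s hs).congr_fun (fun t ht => (hfeq0 s t ht).symm) measurableSet_Ioo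
  refine ⟨hIntegrable, ?_⟩
  -- pulling constants out of integrals
  have hsmul : ∀ (g : ℝ → ℝ) (S : Set ℝ),
      (∫ t in S, ((g t : ℝ) : ℂ) * c) = ((∫ t in S, g t : ℝ) : ℂ) * c := by
    intro g S
    simp_rw [← Complex.real_smul]
    rw [integral_smul_const]
  -- values of the two complex integrals in terms of real χ-integrals
  have hAval : ∀ s : ℝ, 0 < s →
      (∫ t in Set.Ioi (1:ℝ),
        phiPlus τ (iota N t x₁ x₂).1 (iota N t x₁ x₂).2 * ((t ^ (-s) : ℝ) : ℂ) / (t : ℂ))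
      = ((σ * ∫ t in Set.Ioi (1:ℝ), chi T t * t ^ (-s - 1) : ℝ) : ℂ) * c := by
    intro s hs
    rw [setIntegral_congr_fun measurableSet_Ioi (hfeq1 s), hsmul]
    congr 2
    simp_rw [mul_assoc]
    rw [MeasureTheory.integral_const_mul]
  have hBval : ∀ s : ℝ, 0 < s →
      (∫ t in Set.Ioo (0:ℝ) 1,
        phiPlus τ (iota N t x₁ x₂).1 (iota N t x₁ x₂).2 * ((t ^ s : ℝ) : ℂ) / (t : ℂ))
      = ((σ * ∫ t in Set.Ioo (0:ℝ) 1, chi T t * t ^ (s - 1) : ℝ) : ℂ) * c := by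
    intro s hs
    rw [setIntegral_congr_fun measurableSet_Ioo (hfeq0 s), hsmul]
    congr 2
    simp_rw [mul_assoc]
    rw [MeasureTheory.integral_const_mul]
  -- log identity
  have hlogeq : Real.log |x₁ / x₂| = 2 * Real.log T := by
    have habs : |x₁ / x₂| = T ^ 2 := by
      rw [hT2, abs_of_neg (show x₁ / x₂ < 0 by rw [← neg_neg (x₁/x₂)]; rw [← neg_div]; linarith),
        neg_div]
    rw [habs, Real.log_pow]
    push_cast
    ring
  -- rewrite the limit target
  have htarget : (Real.sign x₁ : ℂ) * (Real.log |x₁ / x₂| : ℂ)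
      * eC (((-(x₁ * x₂) / N : ℝ) : ℂ) * τ) = ((σ * (2 * Real.log T) : ℝ) : ℂ) * c := by
    rw [← hcdef, ← hσdef, hlogeq]
    push_cast
    ring
  rw [htarget]
  rcases le_or_gt 1 T with hT1 | hT1
  · -- case 1 ≤ T
    have hval : ∀ s : ℝ, 0 < s →
        ((∫ t in Set.Ioi (1:ℝ),
          phiPlus τ (iota N t x₁ x₂).1 (iota N t x₁ x₂).2 * ((t ^ (-s) : ℝ) : ℂ) / (t : ℂ)) +
        ∫ t in Set.Ioo (0:ℝ) 1,
          phiPlus τ (iota N t x₁ x₂).1 (iota N t x₁ x₂).2 * ((t ^ s : ℝ) : ℂ) / (t : ℂ))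
        = ((σ * ((2 - 2 * T ^ (-s)) / s) : ℝ) : ℂ) * c := by
      intro s hs
      rw [hAval s hs, hBval s hs]
      have hW1 : ∫ t in Set.Ioi (1:ℝ), chi T t * t ^ (-s - 1) = (1 - T ^ (-s)) / s - T ^ (-s) / s := by
        have hsplit : Set.Ioc (1:ℝ) T ∪ Set.Ioi T = Set.Ioi 1 := Set.Ioc_union_Ioi_eq_Ioi hT1
        rw [← hsplit, setIntegral_union (Set.Ioc_disjoint_Ioi le_rfl) measurableSet_Ioi
          ((hχint1 s hs).mono_set (by rw [← hsplit]; exact Set.subset_union_left))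
          ((hχint1 s hs).mono_set (by rw [← hsplit]; exact Set.subset_union_right))]
        have h1 : ∫ t in Set.Ioc (1:ℝ) T, chi T t * t ^ (-s - 1) = (1 - T ^ (-s)) / s := by
          rw [integral_Ioc_eq_integral_Ioo,
            setIntegral_congr_fun measurableSet_Ioo (fun t ht => by
              rw [chi_of_lt ht.2, one_mul]),
            ← integral_Ioc_eq_integral_Ioo, int_Ioc_rpow_neg hs zero_lt_one hT1,
            Real.one_rpow]
        have h2 : ∫ t in Set.Ioi T, chi T t * t ^ (-s - 1) = -(T ^ (-s) / s) := by
          rw [setIntegral_congr_fun measurableSet_Ioi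
            (g := fun t : ℝ => -(t ^ (-s - 1))) (fun t ht => by
              rw [chi_of_gt (Set.mem_Ioi.mp ht)]
              ring),
            integral_neg, int_Ioi_rpow' hs hTpos]
        rw [h1, h2]
        ring
      have hW0 : ∫ t in Set.Ioo (0:ℝ) 1, chi T t * t ^ (s - 1) = 1 / s := by
        rw [setIntegral_congr_fun measurableSet_Ioo (fun t ht => by
            rw [chi_of_lt (lt_of_lt_of_le ht.2 hT1), one_mul]),
          int_Ioo_zero_rpow hs zero_lt_one, Real.one_rpow]
      rw [hW1, hW0, ← add_mul, ← Complex.ofReal_add]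
      congr 2
      field_simp
      ring
    have hlimR : Tendsto (fun s : ℝ => σ * ((2 - 2 * T ^ (-s)) / s))
        (nhdsWithin 0 (Set.Ioi 0)) (nhds (σ * (2 * Real.log T))) := by
      have h := (lim_exp_div (-Real.log T)).const_mul (-2 * σ)
      have heq : ∀ s : ℝ, -2 * σ * ((Real.exp (s * -Real.log T) - 1) / s)
          = σ * ((2 - 2 * T ^ (-s)) / s) := by
        intro s
        rw [Real.rpow_def_of_pos hTpos, show Real.log T * (-s) = s * (-Real.log T) by ring]
        ring
      have hpt : -2 * σ * -Real.log T = σ * (2 * Real.log T) := by ring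
      rw [hpt] at h
      exact h.congr heq
    have hlimC : Tendsto (fun s : ℝ => ((σ * ((2 - 2 * T ^ (-s)) / s) : ℝ) : ℂ) * c)
        (nhdsWithin 0 (Set.Ioi 0)) (nhds (((σ * (2 * Real.log T) : ℝ) : ℂ) * c)) :=
      ((Complex.continuous_ofReal.tendsto _).comp hlimR).mul_const c
    refine Tendsto.congr' ?_ hlimC
    filter_upwards [self_mem_nhdsWithin] with s hs
    exact (hval s hs).symm
  · -- case T < 1
    have hval : ∀ s : ℝ, 0 < s →
        ((∫ t in Set.Ioi (1:ℝ),
          phiPlus τ (iota N t x₁ x₂).1 (iota N t x₁ x₂).2 * ((t ^ (-s) : ℝ) : ℂ) / (t : ℂ)) +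
        ∫ t in Set.Ioo (0:ℝ) 1,
          phiPlus τ (iota N t x₁ x₂).1 (iota N t x₁ x₂).2 * ((t ^ s : ℝ) : ℂ) / (t : ℂ))
        = ((σ * ((2 * T ^ s - 2) / s) : ℝ) : ℂ) * c := by
      intro s hs
      rw [hAval s hs, hBval s hs]
      have hW1 : ∫ t in Set.Ioi (1:ℝ), chi T t * t ^ (-s - 1) = -(1 / s) := by
        rw [setIntegral_congr_fun measurableSet_Ioi
          (g := fun t : ℝ => -(t ^ (-s - 1))) (fun t ht => by
            rw [chi_of_gt (lt_trans hT1 ht)]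
            ring),
          integral_neg, int_Ioi_rpow' hs zero_lt_one, Real.one_rpow]
      have hW0 : ∫ t in Set.Ioo (0:ℝ) 1, chi T t * t ^ (s - 1)
          = T ^ s / s + -((1 - T ^ s) / s) := by
        rw [← integral_Ioc_eq_integral_Ioo]
        have hsplit : Set.Ioc (0:ℝ) T ∪ Set.Ioc T 1 = Set.Ioc 0 1 :=
          Set.Ioc_union_Ioc_eq_Ioc hTpos.le hT1.le
        rw [← hsplit, setIntegral_union (Set.Ioc_disjoint_Ioc_of_le le_rfl)
          measurableSet_Ioc
          ((hχint0 s hs).mono_set (by rw [← hsplit]; exact Set.subset_union_left))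
          ((hχint0 s hs).mono_set (by rw [← hsplit]; exact Set.subset_union_right))]
        have h1 : ∫ t in Set.Ioc (0:ℝ) T, chi T t * t ^ (s - 1) = T ^ s / s := by
          rw [integral_Ioc_eq_integral_Ioo,
            setIntegral_congr_fun measurableSet_Ioo (fun t ht => by
              rw [chi_of_lt ht.2, one_mul]),
            int_Ioo_zero_rpow hs hTpos]
        have h2 : ∫ t in Set.Ioc T (1:ℝ), chi T t * t ^ (s - 1) = -((1 - T ^ s) / s) := by
          rw [setIntegral_congr_fun measurableSet_Ioc
            (g := fun t : ℝ => -(t ^ (s - 1))) (fun t ht => by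
              rw [chi_of_gt ht.1]
              ring),
            integral_neg, int_Ioc_rpow_pos hs hT1.le, Real.one_rpow]
        rw [h1, h2]
      rw [hW1, hW0, ← add_mul, ← Complex.ofReal_add]
      congr 2
      field_simp
      ring
    have hlimR : Tendsto (fun s : ℝ => σ * ((2 * T ^ s - 2) / s))
        (nhdsWithin 0 (Set.Ioi 0)) (nhds (σ * (2 * Real.log T))) := by
      have h := (lim_exp_div (Real.log T)).const_mul (2 * σ)
      have heq : ∀ s : ℝ, 2 * σ * ((Real.exp (s * Real.log T) - 1) / s)
          = σ * ((2 * T ^ s - 2) / s) := by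
        intro s
        rw [Real.rpow_def_of_pos hTpos, show Real.log T * s = s * Real.log T by ring]
        ring
      have hpt : 2 * σ * Real.log T = σ * (2 * Real.log T) := by ring
      rw [hpt] at h
      exact h.congr heq
    have hlimC : Tendsto (fun s : ℝ => ((σ * ((2 * T ^ s - 2) / s) : ℝ) : ℂ) * c)
        (nhdsWithin 0 (Set.Ioi 0)) (nhds (((σ * (2 * Real.log T) : ℝ) : ℂ) * c)) :=
      ((Complex.continuous_ofReal.tendsto _).comp hlimR).mul_const c
    refine Tendsto.congr' ?_ hlimC
    filter_upwards [self_mem_nhdsWithin] with s hs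
    exact (hval s hs).symm

end
end
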